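/- Semigroup property of intertwined Markov kernels: let S and S₀ be measurable spaces, φ : S → S₀ a measurable map, (P_t)_{t≥0} a family of Markov kernels from S to S satisfying the Chapman–Kolmogorov property (for all s, t ≥ 0 and x ∈ S, P_{t+s}(x,·) = ∫_S P_s(z,·) P_t(x,dz)), and K a Markov kernel from S₀ to S such that for every y ∈ S₀ the pushforward of K(y,·) under φ is the Dirac mass δ_y. For t ≥ 0 define the Markov kernel Q_t from S₀ to S₀ by Q_t(y,·) = pushforward under φ of ∫_S P_t(x,·) K(y,dx), and assume the intertwining relation: for all t ≥ 0 and y ∈ S₀, ∫_S P_t(x,·) K(y,dx) = ∫_{S₀} K(z,·) Q_t(y,dz). Then (Q_t)_{t≥0} also satisfies the Chapman–Kolmogorov property: Q_{t+s}(y,·) = ∫_{S₀} Q_s(z,·) Q_t(y,dz) for all s, t ≥ 0 and y ∈ S₀. -/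

import Mathlib

open MeasureTheory

/-- Semigroup property of intertwined Markov kernels: if `(P_t)` satisfies Chapman–Kolmogorov,
`K` is a Markov kernel with `φ`-pushforward the Dirac mass, `Q_t` is defined by
`Q_t(y,·) = (K(y,·) ∘ P_t)` pushed forward by `φ`, and the intertwining relation
`K ∘ P_t = Q_t ∘ K` holds, then `(Q_t)` satisfies Chapman–Kolmogorov. -/
theorem intertwined_kernels_semigroup {S S₀ : Type*} [MeasurableSpace S] [MeasurableSpace S₀]
    (φ : S → S₀) (hφ : Measurable φ)
    (P : ℝ → S → Measure S)
    (hPmeas : ∀ t, Measurable (P t))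
    (hPprob : ∀ t x, IsProbabilityMeasure (P t x))
    (hCK : ∀ s t : ℝ, 0 ≤ s → 0 ≤ t → ∀ x, P (t + s) x = (P t x).bind (P s))
    (K : S₀ → Measure S)
    (hKmeas : Measurable K)
    (hKprob : ∀ y, IsProbabilityMeasure (K y))
    (hKφ : ∀ y, (K y).map φ = Measure.dirac y)
    (Q : ℝ → S₀ → Measure S₀)
    (hQ : ∀ t y, Q t y = ((K y).bind (P t)).map φ)
    (hIntertwine : ∀ t : ℝ, 0 ≤ t → ∀ y, (K y).bind (P t) = (Q t y).bind K) :
    ∀ s t : ℝ, 0 ≤ s → 0 ≤ t → ∀ y, Q (t + s) y = (Q t y).bind (Q s) := by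
  intro s t hs ht y
  have hKP : Measurable fun z => (K z).bind (P s) :=
    (Measure.measurable_bind' (hPmeas s)).comp hKmeas
  have hdφ : Measurable fun x : S => Measure.dirac (φ x) :=
    Measure.measurable_dirac.comp hφ
  have h1 : (K y).bind (P (t + s)) = (Q t y).bind (fun z => (K z).bind (P s)) := by
    have h2 : (K y).bind (P (t + s)) = (K y).bind (fun x => (P t x).bind (P s)) :=
      congrArg _ (funext (hCK s t hs ht))
    rw [h2, ← Measure.bind_bind (hPmeas t).aemeasurable (hPmeas s).aemeasurable, hIntertwine t ht y,
      Measure.bind_bind hKmeas.aemeasurable (hPmeas s).aemeasurable]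
  rw [hQ (t + s) y, h1, ← Measure.bind_dirac_eq_map _ hφ,
    Measure.bind_bind hKP.aemeasurable hdφ.aemeasurable]
  congr 1
  funext z
  rw [Measure.bind_dirac_eq_map _ hφ, ← hQ s z]
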